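/- arXiv:2107.11759 — 4 statements merged into one kernel-verified Lean document; each statement's English description precedes it below -/
import Mathlib

section
/- Let G be a closed subgroup of the linear isometries of ℝ^N with ℓ(G) finite. Then the set Σ = {x ∈ S^{N-1} : #Gx = ℓ(G)} is a compact G-invariant subset of ℝ^N. -/
open Set Metric

noncomputable section

abbrev Euc (N : ℕ) := EuclideanSpace ℝ (Fin N)

/-- The orbit of a point `x` under a subgroup `G` of linear isometries. -/
def Gorbit {N : ℕ} (G : Subgroup (Euc N ≃ₗᵢ[ℝ] Euc N)) (x : Euc N) : Set (Euc N) :=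
  {y | ∃ g ∈ G, g x = y}

/-- The set `Σ` of unit vectors whose orbit has minimal cardinality `ℓ`. -/
def GSigma {N : ℕ} (G : Subgroup (Euc N ≃ₗᵢ[ℝ] Euc N)) (ℓ : ℕ∞) : Set (Euc N) :=
  {x ∈ sphere (0 : Euc N) 1 | (Gorbit G x).encard = ℓ}

lemma Gorbit_smul {N : ℕ} (G : Subgroup (Euc N ≃ₗᵢ[ℝ] Euc N))
    {g : Euc N ≃ₗᵢ[ℝ] Euc N} (hg : g ∈ G) (x : Euc N) :
    Gorbit G (g x) = Gorbit G x := by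
  ext y
  constructor
  · rintro ⟨h, hh, rfl⟩
    exact ⟨h * g, mul_mem hh hg, rfl⟩
  · rintro ⟨h, hh, rfl⟩
    refine ⟨h * g⁻¹, mul_mem hh (inv_mem hg), ?_⟩
    show h (g⁻¹ (g x)) = h x
    simp

theorem sigma_compact_invariant {N : ℕ} (hN : 1 ≤ N)
    (G : Subgroup (Euc N ≃ₗᵢ[ℝ] Euc N))
    (hG : IsClosed ((fun g : Euc N ≃ₗᵢ[ℝ] Euc N =>
      g.toLinearIsometry.toContinuousLinearMap) '' (G : Set (Euc N ≃ₗᵢ[ℝ] Euc N))))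
    (ℓ : ℕ∞)
    (hℓ : IsLeast {n : ℕ∞ | ∃ x : Euc N, x ≠ 0 ∧ (Gorbit G x).encard = n} ℓ)
    (hfin : ℓ ≠ ⊤) :
    IsCompact (GSigma G ℓ) ∧
      ∀ g : Euc N ≃ₗᵢ[ℝ] Euc N, g ∈ G → (fun x => g x) '' GSigma G ℓ = GSigma G ℓ := by
  classical
  have hsub : GSigma G ℓ ⊆ sphere (0 : Euc N) 1 := fun x hx => hx.1
  -- ℓ ≥ 1
  have hℓ1 : 1 ≤ ℓ := by
    obtain ⟨x, hx0, hxe⟩ := hℓ.1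
    rw [← hxe, Set.one_le_encard_iff_nonempty]
    exact ⟨x, 1, one_mem G, rfl⟩
  -- invariance half
  have hinvsub : ∀ g : Euc N ≃ₗᵢ[ℝ] Euc N, g ∈ G →
      (fun x => g x) '' GSigma G ℓ ⊆ GSigma G ℓ := by
    rintro g hg _ ⟨x, ⟨hx1, hx2⟩, rfl⟩
    refine ⟨?_, by rw [Gorbit_smul G hg x]; exact hx2⟩
    simp only [mem_sphere_iff_norm, sub_zero] at hx1 ⊢
    rw [g.norm_map]; exact hx1
  have hinv : ∀ g : Euc N ≃ₗᵢ[ℝ] Euc N, g ∈ G →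
      (fun x => g x) '' GSigma G ℓ = GSigma G ℓ := by
    intro g hg
    refine Set.Subset.antisymm (hinvsub g hg) ?_
    intro x hx
    refine ⟨g⁻¹ x, hinvsub g⁻¹ (inv_mem hg) ⟨x, hx, rfl⟩, ?_⟩
    show g (g⁻¹ x) = x
    simp
  refine ⟨?_, hinv⟩
  -- compactness
  have hclosed : IsClosed (GSigma G ℓ) := by
    refine isClosed_of_closure_subset ?_
    intro x hx
    have hxs : x ∈ sphere (0 : Euc N) 1 := by
      have h := closure_mono hsub hx
      rwa [IsClosed.closure_eq isClosed_sphere] at h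
    have hx0 : x ≠ 0 := by
      intro h
      rw [h] at hxs
      simp at hxs
    refine ⟨hxs, le_antisymm ?_ (hℓ.2 ⟨x, hx0, rfl⟩)⟩
    by_contra hgt
    push_neg at hgt
    lift ℓ to ℕ using hfin with m
    have hlt : (↑m : ℕ∞) < (Gorbit G x).encard := hgt
    have hle : (↑(m + 1) : ℕ∞) ≤ (Gorbit G x).encard := Order.add_one_le_of_lt hlt
    obtain ⟨t, hts, htcard⟩ := Set.exists_subset_encard_eq hle
    have htfin : t.Finite := Set.finite_of_encard_eq_coe htcard
    have hchoice : ∀ z ∈ t, ∃ g, g ∈ G ∧ g x = z := fun z hz => hts hz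
    choose! f hf1 hf2 using hchoice
    -- t has at least two elements
    have hm1 : 1 ≤ m := by exact_mod_cast hℓ1
    have htnt : t.Nontrivial := by
      have h1 : 1 < t.encard := by
        rw [htcard]; exact_mod_cast Nat.lt_of_lt_of_le Nat.one_lt_two (by omega)
      obtain ⟨a, b, ha, hb, hab⟩ := Set.one_lt_encard_iff.mp h1
      exact ⟨a, ha, b, hb, hab⟩
    obtain ⟨a, ha, b, hb, hab⟩ := htnt
    set T := htfin.toFinset with hT
    have haT : a ∈ T := htfin.mem_toFinset.mpr ha
    have hbT : b ∈ T := htfin.mem_toFinset.mpr hb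
    have hD : (T.offDiag.image (fun p => dist p.1 p.2)).Nonempty :=
      ⟨dist a b, Finset.mem_image.mpr ⟨(a, b), Finset.mem_offDiag.mpr ⟨haT, hbT, hab⟩, rfl⟩⟩
    set δ : ℝ := (T.offDiag.image (fun p => dist p.1 p.2)).min' hD with hδdef
    have hδpos : 0 < δ := by
      obtain ⟨p, hp, hpe⟩ :=
        Finset.mem_image.mp ((T.offDiag.image (fun p => dist p.1 p.2)).min'_mem hD)
      rw [hδdef, ← hpe]
      exact dist_pos.mpr (Finset.mem_offDiag.mp hp).2.2
    have hδle : ∀ z ∈ t, ∀ w ∈ t, z ≠ w → δ ≤ dist z w := by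
      intro z hz w hw hzw
      exact Finset.min'_le _ _ (Finset.mem_image.mpr
        ⟨(z, w), Finset.mem_offDiag.mpr
          ⟨htfin.mem_toFinset.mpr hz, htfin.mem_toFinset.mpr hw, hzw⟩, rfl⟩)
    -- get y ∈ Σ close to x
    obtain ⟨y, hy, hxy⟩ := Metric.mem_closure_iff.mp hx (δ / 2) (by linarith)
    -- injectivity of z ↦ (f z) y on t
    have hinj : Set.InjOn (fun z => (f z) y) t := by
      intro z hz w hw he
      by_contra hzw
      have hd1 : dist ((f z) x) ((f z) y) = dist x y := (f z).isometry.dist_eq x y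
      have hd2 : dist ((f w) y) ((f w) x) = dist y x := (f w).isometry.dist_eq y x
      have h1 : dist z w ≤ dist x y + dist y x := by
        calc dist z w = dist ((f z) x) ((f w) x) := by rw [hf2 z hz, hf2 w hw]
          _ ≤ dist ((f z) x) ((f z) y) + dist ((f z) y) ((f w) x) := dist_triangle _ _ _
          _ = dist ((f z) x) ((f z) y) + dist ((f w) y) ((f w) x) := by
              simp only at he; rw [he]
          _ = dist x y + dist y x := by rw [hd1, hd2]
      rw [dist_comm y x] at h1
      have := hδle z hz w hw hzw
      linarith
    have himg : (fun z => (f z) y) '' t ⊆ Gorbit G y := by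
      rintro _ ⟨z, hz, rfl⟩
      exact ⟨f z, hf1 z hz, rfl⟩
    have hcard : (↑(m + 1) : ℕ∞) ≤ (Gorbit G y).encard := by
      rw [← htcard, ← hinj.encard_image]
      exact Set.encard_le_encard himg
    rw [hy.2] at hcard
    exact absurd hcard (by exact_mod_cast Nat.not_succ_le_self m)
  exact Metric.isCompact_of_isClosed_isBounded hclosed (isBounded_sphere.subset hsub)
end
end

section
/- Let G be a closed subgroup of linear isometries of ℝ^N with ℓ(G) finite, and for z in the unit sphere with #Gz = ℓ(G) define μ(Gz) = inf{|gz - hz| : g, h ∈ G, gz ≠ hz} if #Gz ≥ 2, and μ(Gz) = 2|z| if #Gz = 1. Then the infimum μ_G = inf{μ(Gz) : z ∈ Σ} is attained by some z ∈ Σ, where Σ = {x ∈ S^{N-1} : #Gx = ℓ(G)}. -/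
open Set Metric

noncomputable section

/-- `μ(Gz)`: the least distance between two distinct points of the orbit of `z`,
or `2‖z‖` if the orbit is a singleton. -/
def Gmu {N : ℕ} (G : Subgroup (Euc N ≃ₗᵢ[ℝ] Euc N)) (z : Euc N) : ℝ :=
  if 2 ≤ (Gorbit G z).encard then
    sInf {d : ℝ | ∃ g ∈ G, ∃ h ∈ G, g z ≠ h z ∧ d = dist (g z) (h z)}
  else 2 * ‖z‖


open scoped Classical

-- rep lemma
lemma Gorbit_exists_finset {N : ℕ} (G : Subgroup (Euc N ≃ₗᵢ[ℝ] Euc N)) (z : Euc N)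
    {S : Set (Euc N)} (hS : S ⊆ Gorbit G z) (hfin : S.Finite) :
    ∃ T : Finset (Euc N ≃ₗᵢ[ℝ] Euc N), (∀ g ∈ T, g ∈ G) ∧
      Set.InjOn (fun g : Euc N ≃ₗᵢ[ℝ] Euc N => g z) ↑T ∧ (fun g : Euc N ≃ₗᵢ[ℝ] Euc N => g z) '' ↑T = S := by
  classical
  set c : Euc N → (Euc N ≃ₗᵢ[ℝ] Euc N) := fun y =>
    if h : y ∈ Gorbit G z then h.choose else 1 with hc
  have hkey : ∀ y ∈ S, c y ∈ G ∧ (c y) z = y := by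
    intro y hy
    have h : y ∈ Gorbit G z := hS hy
    simp only [hc, dif_pos h]
    exact ⟨h.choose_spec.1, h.choose_spec.2⟩
  refine ⟨hfin.toFinset.image c, ?_, ?_, ?_⟩
  · intro g hg
    simp only [Finset.mem_image, Set.Finite.mem_toFinset] at hg
    obtain ⟨y, hy, rfl⟩ := hg
    exact (hkey y hy).1
  · intro g hg h hh hgh
    simp only [Finset.coe_image, Set.mem_image, Finset.mem_coe,
      Set.Finite.mem_toFinset] at hg hh
    obtain ⟨y, hy, rfl⟩ := hg
    obtain ⟨y', hy', rfl⟩ := hh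
    have h1 := (hkey y hy).2
    have h2 := (hkey y' hy').2
    simp only at hgh
    rw [h1, h2] at hgh
    rw [hgh]
  · ext y
    simp only [Finset.coe_image, Set.mem_image, Finset.mem_coe,
      Set.Finite.mem_toFinset]
    constructor
    · rintro ⟨g, ⟨u, hu, rfl⟩, rfl⟩
      rw [(hkey u hu).2]; exact hu
    · intro hy
      exact ⟨c y, ⟨y, hy, rfl⟩, (hkey y hy).2⟩

-- injectivity is stable under perturbation
lemma injOn_near {N : ℕ} (T : Finset (Euc N ≃ₗᵢ[ℝ] Euc N)) (z : Euc N)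
    (hinj : Set.InjOn (fun g : Euc N ≃ₗᵢ[ℝ] Euc N => g z) ↑T) :
    ∃ ε > 0, ∀ w : Euc N, dist w z < ε →
      Set.InjOn (fun g : Euc N ≃ₗᵢ[ℝ] Euc N => g w) ↑T := by
  classical
  set U : Set (Euc N) :=
    ⋂ p ∈ (T ×ˢ T).filter (fun p : _ × _ => p.1 ≠ p.2), {w | p.1 w ≠ p.2 w} with hU
  have hopen : IsOpen U :=
    isOpen_biInter_finset fun p _ => isOpen_ne_fun p.1.continuous p.2.continuous
  have hzU : z ∈ U := by
    rw [hU]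
    refine Set.mem_iInter₂.mpr fun p hp => ?_
    simp only [Finset.mem_filter, Finset.mem_product] at hp
    intro hne
    exact hp.2 (hinj (Finset.mem_coe.mpr hp.1.1) (Finset.mem_coe.mpr hp.1.2) hne)
  obtain ⟨ε, hε, hball⟩ := Metric.isOpen_iff.mp hopen z hzU
  refine ⟨ε, hε, fun w hw => ?_⟩
  have hwU : w ∈ U := hball (mem_ball.mpr hw)
  intro g hg h hh hgh
  by_contra hne
  have hp : (g, h) ∈ (T ×ˢ T).filter (fun p : _ × _ => p.1 ≠ p.2) :=
    Finset.mem_filter.mpr ⟨Finset.mem_product.mpr ⟨hg, hh⟩, hne⟩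
  exact (Set.mem_iInter₂.mp hwU (g, h) hp) hgh

-- Gmu computation
lemma Gmu_eq_min' {N : ℕ} (G : Subgroup (Euc N ≃ₗᵢ[ℝ] Euc N)) (w : Euc N)
    (T : Finset (Euc N ≃ₗᵢ[ℝ] Euc N)) (hTG : ∀ g ∈ T, g ∈ G)
    (hinj : Set.InjOn (fun g : Euc N ≃ₗᵢ[ℝ] Euc N => g w) ↑T)
    (horb : Gorbit G w = (fun g : Euc N ≃ₗᵢ[ℝ] Euc N => g w) '' ↑T)
    (h2 : 2 ≤ (Gorbit G w).encard)
    (hPne : ((T ×ˢ T).filter (fun p : _ × _ => p.1 ≠ p.2)).Nonempty) :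
    Gmu G w = (((T ×ˢ T).filter (fun p : _ × _ => p.1 ≠ p.2)).image
        (fun p => dist (p.1 w) (p.2 w))).min' (hPne.image _) := by
  classical
  rw [Gmu, if_pos h2]
  have hSeq : {d : ℝ | ∃ g ∈ G, ∃ h ∈ G, g w ≠ h w ∧ d = dist (g w) (h w)} =
      ↑(((T ×ˢ T).filter (fun p : _ × _ => p.1 ≠ p.2)).image
        (fun p => dist (p.1 w) (p.2 w))) := by
    ext d
    simp only [Set.mem_setOf_eq, Finset.coe_image, Set.mem_image, Finset.mem_coe,
      Finset.mem_filter, Finset.mem_product]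
    constructor
    · rintro ⟨g, hg, h, hh, hne, rfl⟩
      have hgO : g w ∈ Gorbit G w := ⟨g, hg, rfl⟩
      have hhO : h w ∈ Gorbit G w := ⟨h, hh, rfl⟩
      rw [horb] at hgO hhO
      obtain ⟨g', hg', hg'e⟩ := hgO
      obtain ⟨h', hh', hh'e⟩ := hhO
      simp only at hg'e hh'e
      refine ⟨(g', h'), ⟨⟨Finset.mem_coe.mp hg', Finset.mem_coe.mp hh'⟩, ?_⟩, ?_⟩
      · intro heq
        simp only at heq
        subst heq
        exact hne (hg'e ▸ hh'e ▸ rfl)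
      · simp only
        rw [hg'e, hh'e]
    · rintro ⟨⟨g, h⟩, ⟨⟨hgT, hhT⟩, hgh⟩, rfl⟩
      refine ⟨g, hTG g hgT, h, hTG h hhT, ?_, rfl⟩
      intro he
      exact hgh (hinj (Finset.mem_coe.mpr hgT) (Finset.mem_coe.mpr hhT) he)
  rw [hSeq, (hPne.image _).csInf_eq_min']

-- comparison lemma
lemma min'_comp {N : ℕ} (w z : Euc N)
    (P : Finset ((Euc N ≃ₗᵢ[ℝ] Euc N) × (Euc N ≃ₗᵢ[ℝ] Euc N))) (hP : P.Nonempty) :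
    (P.image fun p => dist (p.1 w) (p.2 w)).min' (hP.image _) ≤
      (P.image fun p => dist (p.1 z) (p.2 z)).min' (hP.image _) + 2 * dist w z := by
  obtain ⟨p, hpP, hpe⟩ := Finset.mem_image.mp
    ((P.image fun p => dist (p.1 z) (p.2 z)).min'_mem (hP.image _))
  have h1 : (P.image fun p => dist (p.1 w) (p.2 w)).min' (hP.image _) ≤
      dist (p.1 w) (p.2 w) :=
    Finset.min'_le _ _ (Finset.mem_image_of_mem _ hpP)
  have h2 : dist (p.1 w) (p.2 w) ≤ dist (p.1 z) (p.2 z) + 2 * dist w z := by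
    have h3 := dist_triangle4 (p.1 w) (p.1 z) (p.2 z) (p.2 w)
    rw [p.1.dist_map, p.2.dist_map, dist_comm z w] at h3
    linarith
  linarith

-- Σ is nonempty
lemma GSigma_nonempty {N : ℕ} (G : Subgroup (Euc N ≃ₗᵢ[ℝ] Euc N)) (ℓ : ℕ∞)
    (hℓ : IsLeast {n : ℕ∞ | ∃ x : Euc N, x ≠ 0 ∧ (Gorbit G x).encard = n} ℓ) :
    (GSigma G ℓ).Nonempty := by
  obtain ⟨x, hx0, hxe⟩ := hℓ.1
  have hnx : ‖x‖ ≠ 0 := norm_ne_zero_iff.mpr hx0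
  refine ⟨‖x‖⁻¹ • x, ?_, ?_⟩
  · rw [mem_sphere_zero_iff_norm, norm_smul, norm_inv, norm_norm,
      inv_mul_cancel₀ hnx]
  · have horb : Gorbit G (‖x‖⁻¹ • x) = (fun y => ‖x‖⁻¹ • y) '' Gorbit G x := by
      ext y
      constructor
      · rintro ⟨g, hg, rfl⟩
        exact ⟨g x, ⟨g, hg, rfl⟩, (map_smul g _ x).symm⟩
      · rintro ⟨u, ⟨g, hg, rfl⟩, rfl⟩
        exact ⟨g, hg, map_smul g _ x⟩
    rw [horb, Set.InjOn.encard_image, hxe]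
    exact (smul_right_injective _ (inv_ne_zero hnx)).injOn

-- Σ is closed
lemma GSigma_closed {N : ℕ} (G : Subgroup (Euc N ≃ₗᵢ[ℝ] Euc N)) (L : ℕ)
    (hℓ : IsLeast {n : ℕ∞ | ∃ x : Euc N, x ≠ 0 ∧ (Gorbit G x).encard = n} (L : ℕ∞)) :
    IsClosed (GSigma G (L : ℕ∞)) := by
  have hopen : IsOpen {x : Euc N | (L : ℕ∞) + 1 ≤ (Gorbit G x).encard} := by
    rw [Metric.isOpen_iff]
    intro x hx
    obtain ⟨S, hSsub, hSenc⟩ := Set.exists_subset_encard_eq (hx : (L : ℕ∞) + 1 ≤ _)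
    have hSfin : S.Finite := by
      apply Set.finite_of_encard_eq_coe (k := L + 1)
      rw [hSenc]; push_cast; ring
    obtain ⟨T, hTG, hinj, himg⟩ := Gorbit_exists_finset G x hSsub hSfin
    obtain ⟨ε, hε, hnear⟩ := injOn_near T x hinj
    refine ⟨ε, hε, fun w hw => ?_⟩
    have hinjw := hnear w (mem_ball.mp hw)
    have hsub : (fun g : Euc N ≃ₗᵢ[ℝ] Euc N => g w) '' ↑T ⊆ Gorbit G w := by
      rintro y ⟨g, hg, rfl⟩
      exact ⟨g, hTG g (Finset.mem_coe.mp hg), rfl⟩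
    have henc : ((fun g : Euc N ≃ₗᵢ[ℝ] Euc N => g w) '' ↑T).encard = (L : ℕ∞) + 1 := by
      rw [hinjw.encard_image, ← hinj.encard_image, himg, hSenc]
    calc (L : ℕ∞) + 1 = _ := henc.symm
      _ ≤ (Gorbit G w).encard := Set.encard_mono hsub
  have hset : GSigma G (L : ℕ∞) =
      sphere (0 : Euc N) 1 ∩ {x | ¬ ((L : ℕ∞) + 1 ≤ (Gorbit G x).encard)} := by
    ext x
    simp only [GSigma, Set.mem_setOf_eq, Set.mem_inter_iff, Set.mem_sep_iff]
    constructor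
    · rintro ⟨hs, he⟩
      refine ⟨hs, ?_⟩
      rw [he, not_le]
      exact_mod_cast Nat.lt_succ_self L
    · rintro ⟨hs, he⟩
      refine ⟨hs, ?_⟩
      have hx0 : x ≠ 0 := by
        intro h0
        rw [mem_sphere_zero_iff_norm, h0, norm_zero] at hs
        norm_num at hs
      have hge : (L : ℕ∞) ≤ (Gorbit G x).encard := hℓ.2 ⟨x, hx0, rfl⟩
      rw [not_le] at he
      have : (Gorbit G x).encard < (L : ℕ∞) + 1 := he
      exact le_antisymm (Order.le_of_lt_add_one this) hge
  rw [hset]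
  exact (isClosed_sphere).inter (isClosed_compl_iff.mpr hopen)

theorem muG_attained {N : ℕ} (hN : 1 ≤ N)
    (G : Subgroup (Euc N ≃ₗᵢ[ℝ] Euc N))
    (hG : IsClosed ((fun g : Euc N ≃ₗᵢ[ℝ] Euc N =>
      g.toLinearIsometry.toContinuousLinearMap) '' (G : Set (Euc N ≃ₗᵢ[ℝ] Euc N))))
    (ℓ : ℕ∞)
    (hℓ : IsLeast {n : ℕ∞ | ∃ x : Euc N, x ≠ 0 ∧ (Gorbit G x).encard = n} ℓ)
    (hfin : ℓ ≠ ⊤) :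
    ∃ z ∈ GSigma G ℓ, ∀ w ∈ GSigma G ℓ, Gmu G z ≤ Gmu G w := by
  classical
  obtain ⟨L, rfl⟩ : ∃ L : ℕ, ℓ = (L : ℕ∞) := by
    obtain ⟨L, hL⟩ := WithTop.ne_top_iff_exists.mp hfin
    exact ⟨L, hL.symm⟩
  have hne : (GSigma G (L : ℕ∞)).Nonempty := GSigma_nonempty G _ hℓ
  rcases le_or_gt L 1 with hL1 | hL2
  · -- small case: orbits are singletons (or L = 0, impossible but harmless)
    obtain ⟨z, hz⟩ := hne
    refine ⟨z, hz, fun w hw => ?_⟩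
    have key : ∀ v ∈ GSigma G (L : ℕ∞), Gmu G v = 2 := by
      intro v hv
      have hnot : ¬ (2 ≤ (Gorbit G v).encard) := by
        rw [hv.2, not_le]
        exact_mod_cast Nat.lt_of_le_of_lt hL1 (by norm_num)
      rw [Gmu, if_neg hnot, mem_sphere_zero_iff_norm.mp hv.1]
      ring
    rw [key z hz, key w hw]
  · -- main case : L ≥ 2
    have h2L : (2 : ℕ∞) ≤ (L : ℕ∞) := by exact_mod_cast hL2
    have hcont : ContinuousOn (Gmu G) (GSigma G (L : ℕ∞)) := by
      intro z hz
      have h2z : 2 ≤ (Gorbit G z).encard := hz.2 ▸ h2L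
      have hofin : (Gorbit G z).Finite := Set.finite_of_encard_eq_coe hz.2
      obtain ⟨T, hTG, hinjz, himg⟩ :=
        Gorbit_exists_finset G z (le_refl (Gorbit G z)) hofin
      obtain ⟨ε, hε, hnear⟩ := injOn_near T z hinjz
      have horbz : Gorbit G z = (fun g : Euc N ≃ₗᵢ[ℝ] Euc N => g z) '' ↑T := himg.symm
      have hTenc : (↑T : Set (Euc N ≃ₗᵢ[ℝ] Euc N)).encard = (L : ℕ∞) := by
        rw [← hinjz.encard_image, himg, hz.2]
      have hPne : ((T ×ˢ T).filter (fun p : _ × _ => p.1 ≠ p.2)).Nonempty := by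
        obtain ⟨a, b, ha, hb, hab⟩ := Set.one_lt_encard_iff.mp
          (lt_of_lt_of_le (by exact_mod_cast Nat.one_lt_two) h2z)
        rw [horbz] at ha hb
        obtain ⟨g, hgT, rfl⟩ := ha
        obtain ⟨h, hhT, rfl⟩ := hb
        refine ⟨(g, h), Finset.mem_filter.mpr
          ⟨Finset.mem_product.mpr ⟨Finset.mem_coe.mp hgT, Finset.mem_coe.mp hhT⟩, ?_⟩⟩
        intro heq
        simp only at heq
        subst heq
        exact hab rfl
      -- local Lipschitz bound
      have key : ∀ w ∈ GSigma G (L : ℕ∞), dist w z < ε →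
          dist (Gmu G w) (Gmu G z) ≤ 2 * dist w z := by
        intro w hw hwd
        have hinjw := hnear w hwd
        have h2w : 2 ≤ (Gorbit G w).encard := hw.2 ▸ h2L
        have horbw : Gorbit G w = (fun g : Euc N ≃ₗᵢ[ℝ] Euc N => g w) '' ↑T := by
          have hsub : (fun g : Euc N ≃ₗᵢ[ℝ] Euc N => g w) '' ↑T ⊆ Gorbit G w := by
            rintro y ⟨g, hg, rfl⟩
            exact ⟨g, hTG g (Finset.mem_coe.mp hg), rfl⟩
          refine (Set.Finite.eq_of_subset_of_encard_le ?_ hsub ?_).symm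
          · exact (T.finite_toSet).image _
          · rw [hinjw.encard_image, hTenc, hw.2]
        have hw_eq := Gmu_eq_min' G w T hTG hinjw horbw h2w hPne
        have hz_eq := Gmu_eq_min' G z T hTG hinjz horbz h2z hPne
        rw [Real.dist_eq, hw_eq, hz_eq, abs_sub_le_iff]
        constructor
        · have := min'_comp w z _ hPne
          linarith
        · have := min'_comp z w _ hPne
          rw [dist_comm z w] at this
          linarith
      rw [Metric.continuousWithinAt_iff]
      intro δ hδ
      refine ⟨min ε (δ / 3), by positivity, fun w hwS hwd => ?_⟩
      have h1 : dist w z < ε := lt_of_lt_of_le hwd (min_le_left _ _)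
      have h2 : dist w z < δ / 3 := lt_of_lt_of_le hwd (min_le_right _ _)
      calc dist (Gmu G w) (Gmu G z) ≤ 2 * dist w z := key w hwS h1
        _ < δ := by linarith
    have hcomp : IsCompact (GSigma G (L : ℕ∞)) :=
      (isCompact_sphere (0 : Euc N) 1).of_isClosed_subset
        (GSigma_closed G L hℓ) (fun x hx => hx.1)
    obtain ⟨z, hzS, hmin⟩ := hcomp.exists_isMinOn hne hcont
    exact ⟨z, hzS, fun w hw => isMinOn_iff.mp hmin w hw⟩
end
end

section
/- Let G be a closed subgroup of linear isometries of ℝ^N with ℓ(G) finite and μ_G as defined. Then 0 < μ_G ≤ 2. -/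
open Set Metric

noncomputable section

namespace MuAux

variable {N : ℕ} {G : Subgroup (Euc N ≃ₗᵢ[ℝ] Euc N)} {ℓ : ℕ∞}

/-- The set of distances between distinct orbit points. -/
def Dset (G : Subgroup (Euc N ≃ₗᵢ[ℝ] Euc N)) (z : Euc N) : Set ℝ :=
  {d : ℝ | ∃ g ∈ G, ∃ h ∈ G, g z ≠ h z ∧ d = dist (g z) (h z)}

lemma Gmu_eq_of_two_le {z : Euc N} (h : 2 ≤ (Gorbit G z).encard) :
    Gmu G z = sInf (Dset G z) := if_pos h

lemma norm_of_mem_Gorbit {x y : Euc N} (h : y ∈ Gorbit G x) : ‖y‖ = ‖x‖ := by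
  obtain ⟨g, -, rfl⟩ := h; exact g.norm_map x

lemma Dset_nonneg {z : Euc N} : ∀ d ∈ Dset G z, 0 ≤ d := by
  rintro d ⟨g, hg, h, hh, hne, rfl⟩; exact dist_nonneg

lemma bddBelow_Dset (z : Euc N) : BddBelow (Dset G z) := ⟨0, Dset_nonneg⟩

lemma Dset_finite {z : Euc N} (hz : (Gorbit G z).Finite) : (Dset G z).Finite := by
  apply Set.Finite.subset ((hz.prod hz).image (fun p : Euc N × Euc N => dist p.1 p.2))
  rintro d ⟨g, hg, h, hh, hne, rfl⟩
  exact ⟨(g z, h z), ⟨⟨g, hg, rfl⟩, ⟨h, hh, rfl⟩⟩, rfl⟩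

lemma Dset_nonempty {z : Euc N} (h : 2 ≤ (Gorbit G z).encard) : (Dset G z).Nonempty := by
  have h1 : 1 < (Gorbit G z).encard := lt_of_lt_of_le (by norm_num) h
  obtain ⟨a, b, ha, hb, hab⟩ := Set.one_lt_encard_iff.1 h1
  obtain ⟨g, hg, rfl⟩ := ha
  obtain ⟨h', hh', rfl⟩ := hb
  exact ⟨_, g, hg, h', hh', hab, rfl⟩

lemma Gmu_le_dist {z a b : Euc N} (ha : a ∈ Gorbit G z) (hb : b ∈ Gorbit G z)
    (hab : a ≠ b) : Gmu G z ≤ dist a b := by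
  obtain ⟨g, hg, rfl⟩ := ha
  obtain ⟨h, hh, rfl⟩ := hb
  have h1 : 1 < (Gorbit G z).encard :=
    Set.one_lt_encard_iff.2 ⟨_, _, ⟨g, hg, rfl⟩, ⟨h, hh, rfl⟩, hab⟩
  have h2 : 2 ≤ (Gorbit G z).encard := by
    rw [show (2 : ℕ∞) = 1 + 1 from rfl, ENat.add_one_le_iff (by simp)]
    exact h1
  rw [Gmu_eq_of_two_le h2]
  exact csInf_le (bddBelow_Dset z) ⟨g, hg, h, hh, hab, rfl⟩

lemma Gmu_pos {z : Euc N} (hz : (Gorbit G z).Finite) (hzn : z ≠ 0) : 0 < Gmu G z := by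
  by_cases h2 : 2 ≤ (Gorbit G z).encard
  · rw [Gmu_eq_of_two_le h2]
    obtain ⟨g, hg, h, hh, hab, he⟩ := (Dset_nonempty h2).csInf_mem (Dset_finite hz)
    rw [he]; exact dist_pos.2 hab
  · rw [Gmu, if_neg h2]
    have := norm_pos_iff.2 hzn
    linarith

lemma Gmu_le_two {z : Euc N} (hz : z ∈ sphere (0 : Euc N) 1) : Gmu G z ≤ 2 := by
  rw [mem_sphere_zero_iff_norm] at hz
  by_cases h2 : 2 ≤ (Gorbit G z).encard
  · rw [Gmu_eq_of_two_le h2]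
    obtain ⟨d, g, hg, h, hh, hab, rfl⟩ := Dset_nonempty h2
    refine le_trans (csInf_le (bddBelow_Dset z) ⟨g, hg, h, hh, hab, rfl⟩) ?_
    have h1 : ‖g z‖ = 1 := by rw [norm_of_mem_Gorbit ⟨g, hg, rfl⟩, hz]
    have h2 : ‖h z‖ = 1 := by rw [norm_of_mem_Gorbit ⟨h, hh, rfl⟩, hz]
    calc dist (g z) (h z) = ‖g z - h z‖ := dist_eq_norm _ _
      _ ≤ ‖g z‖ + ‖h z‖ := norm_sub_le _ _
      _ = 2 := by rw [h1, h2]; norm_num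
  · rw [Gmu, if_neg h2, hz]; norm_num

lemma sphere_ne_zero {x : Euc N} (h : x ∈ sphere (0 : Euc N) 1) : x ≠ 0 := by
  rw [mem_sphere_zero_iff_norm] at h
  intro h0; rw [h0, norm_zero] at h; norm_num at h

lemma le_encard (hℓ : IsLeast {n : ℕ∞ | ∃ x : Euc N, x ≠ 0 ∧ (Gorbit G x).encard = n} ℓ)
    {x : Euc N} (hx : x ≠ 0) : ℓ ≤ (Gorbit G x).encard :=
  hℓ.2 ⟨x, hx, rfl⟩

lemma GSigma_nonempty
    (hℓ : IsLeast {n : ℕ∞ | ∃ x : Euc N, x ≠ 0 ∧ (Gorbit G x).encard = n} ℓ) :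
    (GSigma G ℓ).Nonempty := by
  obtain ⟨x, hx0, hx⟩ := hℓ.1
  have hxn : ‖x‖ ≠ 0 := norm_ne_zero_iff.2 hx0
  set c : ℝ := ‖x‖⁻¹ with hc
  have hc0 : c ≠ 0 := inv_ne_zero hxn
  refine ⟨c • x, ?_, ?_⟩
  · rw [mem_sphere_zero_iff_norm, norm_smul, hc, norm_inv, norm_norm, inv_mul_cancel₀ hxn]
  · have horb : Gorbit G (c • x) = (c • ·) '' Gorbit G x := by
      ext y
      constructor
      · rintro ⟨g, hg, rfl⟩
        exact ⟨g x, ⟨g, hg, rfl⟩, (map_smul g c x).symm⟩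
      · rintro ⟨w, ⟨g, hg, rfl⟩, rfl⟩
        exact ⟨g, hg, map_smul g c x⟩
    rw [horb, Set.InjOn.encard_image fun a _ b _ hab => smul_right_injective _ hc0 hab, hx]

lemma GSigma_eq (hℓ : IsLeast {n : ℕ∞ | ∃ x : Euc N, x ≠ 0 ∧ (Gorbit G x).encard = n} ℓ) :
    GSigma G ℓ = sphere (0 : Euc N) 1 ∩ {x | (Gorbit G x).encard ≤ ℓ} := by
  ext x
  simp only [GSigma, Set.mem_sep_iff, Set.mem_inter_iff, Set.mem_setOf_eq]
  exact ⟨fun ⟨h1, h2⟩ => ⟨h1, h2.le⟩,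
    fun ⟨h1, h2⟩ => ⟨h1, le_antisymm h2 (le_encard hℓ (sphere_ne_zero h1))⟩⟩

lemma isClosed_small (hfin : ℓ ≠ ⊤) (h1ℓ : 1 ≤ ℓ) :
    IsClosed {x : Euc N | (Gorbit G x).encard ≤ ℓ} := by
  rw [← isOpen_compl_iff, Metric.isOpen_iff]
  rintro x hx
  simp only [Set.mem_compl_iff, Set.mem_setOf_eq, not_le] at hx
  obtain ⟨T, hTsub, hTcard⟩ :=
    Set.exists_subset_encard_eq ((ENat.add_one_le_iff hfin).2 hx)
  have hT_ne_top : T.encard ≠ ⊤ := by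
    rw [hTcard]; exact WithTop.add_ne_top.2 ⟨hfin, ENat.one_ne_top⟩
  have hTfin : T.Finite := Set.encard_ne_top_iff.1 hT_ne_top
  -- choose group elements carrying x to the points of T
  have hgt : ∀ t ∈ T, ∃ g : Euc N ≃ₗᵢ[ℝ] Euc N, g ∈ G ∧ g x = t := by
    intro t ht; obtain ⟨g, hg, hgx⟩ := hTsub ht; exact ⟨g, hg, hgx⟩
  choose! g hgG hgx using hgt
  -- minimal distance between distinct points of T
  have hTnt : ∃ a ∈ T, ∃ b ∈ T, a ≠ b := by
    have : 1 < T.encard := by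
      rw [hTcard]
      calc (1 : ℕ∞) ≤ ℓ := h1ℓ
        _ < ℓ + 1 := (ENat.lt_add_one_iff hfin).2 le_rfl
    obtain ⟨a, b, ha, hb, hab⟩ := Set.one_lt_encard_iff.1 this
    exact ⟨a, ha, b, hb, hab⟩
  classical
  set Tf := hTfin.toFinset with hTf
  have hPne : Tf.offDiag.Nonempty := by
    obtain ⟨a, ha, b, hb, hab⟩ := hTnt
    exact ⟨(a, b), Finset.mem_offDiag.2
      ⟨hTfin.mem_toFinset.2 ha, hTfin.mem_toFinset.2 hb, hab⟩⟩
  set ε := Tf.offDiag.inf' hPne (fun p => dist p.1 p.2) with hε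
  have hεpos : 0 < ε := by
    rw [hε, Finset.lt_inf'_iff]
    rintro ⟨a, b⟩ hab
    exact dist_pos.2 (Finset.mem_offDiag.1 hab).2.2
  refine ⟨ε / 2, by linarith, ?_⟩
  intro x' hx'
  rw [Metric.mem_ball] at hx'
  simp only [Set.mem_compl_iff, Set.mem_setOf_eq, not_le]
  -- the map t ↦ g t x' is injective on T
  set F : Euc N → Euc N := fun t => g t x' with hF
  have hinj : Set.InjOn F T := by
    intro s hs t ht hst
    by_contra hne
    have hd : ε ≤ dist s t := by
      have : (s, t) ∈ Tf.offDiag := Finset.mem_offDiag.2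
        ⟨hTfin.mem_toFinset.2 hs, hTfin.mem_toFinset.2 ht, hne⟩
      exact Finset.inf'_le _ this
    have e1 : dist (g s x) (g s x') = dist x x' := (g s).dist_map x x'
    have e2 : dist (g t x') (g t x) = dist x' x := (g t).dist_map x' x
    have tri : dist s t ≤ dist s (F s) + dist (F s) (F t) + dist (F t) t :=
      dist_triangle4 s (F s) (F t) t
    have hs' : dist s (F s) = dist x x' := by
      show dist s ((g s) x') = dist x x'
      nth_rewrite 1 [← hgx s hs]
      exact e1
    have ht' : dist (F t) t = dist x' x := by
      show dist ((g t) x') t = dist x' x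
      nth_rewrite 2 [← hgx t ht]
      exact e2
    rw [hs', ht', hst, dist_self] at tri
    rw [dist_comm] at hx'
    rw [dist_comm x' x] at tri
    linarith
  have himg : F '' T ⊆ Gorbit G x' := by
    rintro - ⟨t, ht, rfl⟩
    exact ⟨g t, hgG t ht, rfl⟩
  calc ℓ < ℓ + 1 := (ENat.lt_add_one_iff hfin).2 le_rfl
    _ = T.encard := hTcard.symm
    _ = (F '' T).encard := (hinj.encard_image).symm
    _ ≤ (Gorbit G x').encard := Set.encard_mono himg

lemma key (hfin : ℓ ≠ ⊤) {z z' : Euc N}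
    (hz : z ∈ GSigma G ℓ) (hz' : z' ∈ GSigma G ℓ) (h2ℓ : 2 ≤ ℓ)
    (hd : dist z' z < Gmu G z / 4) : Gmu G z / 2 ≤ Gmu G z' := by
  obtain ⟨hzs, hze⟩ := hz
  obtain ⟨hzs', hze'⟩ := hz'
  have hfinA : (Gorbit G z).Finite := Set.encard_ne_top_iff.1 (by rw [hze]; exact hfin)
  have hfinB : (Gorbit G z').Finite := Set.encard_ne_top_iff.1 (by rw [hze']; exact hfin)
  have hδpos : 0 < Gmu G z := Gmu_pos hfinA (sphere_ne_zero hzs)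
  set δ := Gmu G z with hδ
  have h2B : 2 ≤ (Gorbit G z').encard := by rw [hze']; exact h2ℓ
  haveI : Finite ↥(Gorbit G z) := hfinA.to_subtype
  haveI : Finite ↥(Gorbit G z') := hfinB.to_subtype
  have hcov : ∀ p : ↥(Gorbit G z'), ∃ a : ↥(Gorbit G z), dist (p : Euc N) a < δ / 4 := by
    rintro ⟨p, hp⟩
    obtain ⟨g, hg, rfl⟩ := hp
    refine ⟨⟨g z, g, hg, rfl⟩, ?_⟩
    show dist (g z') (g z) < δ / 4
    rw [g.dist_map]
    exact hd
  choose f hf using hcov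
  have hsurj : Function.Surjective f := by
    rintro ⟨a, ha⟩
    obtain ⟨g, hg, rfl⟩ := ha
    set p : ↥(Gorbit G z') := ⟨g z', g, hg, rfl⟩ with hp
    refine ⟨p, ?_⟩
    by_contra hne
    have hval : ((f p : Euc N)) ≠ g z := fun h => hne (Subtype.ext h.symm).symm
    have h1 : δ ≤ dist ((f p : Euc N)) (g z) := Gmu_le_dist (f p).2 ⟨g, hg, rfl⟩ hval
    have h2 : dist (g z') ((f p : Euc N)) < δ / 4 := hf p
    have h3 : dist (g z') (g z) < δ / 4 := by rw [g.dist_map]; exact hd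
    have tri := dist_triangle ((f p : Euc N)) (g z') (g z)
    have hc : dist ((f p : Euc N)) (g z') = dist (g z') ((f p : Euc N)) := dist_comm _ _
    linarith
  have hinj : Function.Injective f := by
    haveI := hfinA.fintype
    haveI := hfinB.fintype
    have hcard : Fintype.card ↥(Gorbit G z') = Fintype.card ↥(Gorbit G z) := by
      rw [← Nat.card_eq_fintype_card, ← Nat.card_eq_fintype_card,
        Nat.card_coe_set_eq, Nat.card_coe_set_eq, Set.ncard_def, Set.ncard_def,
        hze, hze']
    exact (Finite.injective_iff_surjective_of_equiv (Fintype.equivOfCardEq hcard)).2 hsurj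
  rw [Gmu_eq_of_two_le h2B]
  apply le_csInf (Dset_nonempty h2B)
  rintro d ⟨g, hg, h, hh, hne, rfl⟩
  set p : ↥(Gorbit G z') := ⟨g z', g, hg, rfl⟩ with hp
  set q : ↥(Gorbit G z') := ⟨h z', h, hh, rfl⟩ with hq
  have hpq : p ≠ q := fun heq => hne (congrArg Subtype.val heq)
  have hfpq : ((f p : Euc N)) ≠ (f q : Euc N) := fun heq => hpq (hinj (Subtype.ext heq))
  have h1 : δ ≤ dist ((f p : Euc N)) (f q : Euc N) := Gmu_le_dist (f p).2 (f q).2 hfpq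
  have h2 : dist (g z') ((f p : Euc N)) < δ / 4 := hf p
  have h3 : dist (h z') ((f q : Euc N)) < δ / 4 := hf q
  have tri : dist ((f p : Euc N)) (f q : Euc N) ≤
      dist ((f p : Euc N)) (g z') + dist (g z') (h z') + dist (h z') (f q : Euc N) :=
    dist_triangle4 _ _ _ _
  have hc : dist ((f p : Euc N)) (g z') = dist (g z') ((f p : Euc N)) := dist_comm _ _
  linarith

end MuAux

theorem muG_bounds {N : ℕ} (hN : 1 ≤ N)
    (G : Subgroup (Euc N ≃ₗᵢ[ℝ] Euc N))
    (hG : IsClosed ((fun g : Euc N ≃ₗᵢ[ℝ] Euc N =>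
      g.toLinearIsometry.toContinuousLinearMap) '' (G : Set (Euc N ≃ₗᵢ[ℝ] Euc N))))
    (ℓ : ℕ∞)
    (hℓ : IsLeast {n : ℕ∞ | ∃ x : Euc N, x ≠ 0 ∧ (Gorbit G x).encard = n} ℓ)
    (hfin : ℓ ≠ ⊤) :
    0 < sInf (Gmu G '' GSigma G ℓ) ∧ sInf (Gmu G '' GSigma G ℓ) ≤ 2 := by
  classical
  obtain ⟨u, hu⟩ := MuAux.GSigma_nonempty hℓ
  have horbfin : ∀ z ∈ GSigma G ℓ, (Gorbit G z).Finite := fun z hz =>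
    Set.encard_ne_top_iff.1 (by rw [hz.2]; exact hfin)
  have hpos : ∀ z ∈ GSigma G ℓ, 0 < Gmu G z := fun z hz =>
    MuAux.Gmu_pos (horbfin z hz) (MuAux.sphere_ne_zero hz.1)
  have himg_ne : (Gmu G '' GSigma G ℓ).Nonempty := ⟨_, u, hu, rfl⟩
  have hbdd : BddBelow (Gmu G '' GSigma G ℓ) :=
    ⟨0, by rintro w ⟨z, hz, rfl⟩; exact (hpos z hz).le⟩
  constructor
  · rcases lt_or_ge ℓ 2 with hl | hl
    · have h2le : (2 : ℝ) ≤ sInf (Gmu G '' GSigma G ℓ) := by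
        apply le_csInf himg_ne
        rintro w ⟨z, hz, rfl⟩
        rw [Gmu, if_neg (by rw [hz.2]; exact not_le.2 hl),
          mem_sphere_zero_iff_norm.1 hz.1]
        norm_num
      linarith
    · have h1ℓ : (1 : ℕ∞) ≤ ℓ := le_trans (by norm_num) hl
      have hcl : IsClosed (GSigma G ℓ) := by
        rw [MuAux.GSigma_eq hℓ]
        exact isClosed_sphere.inter (MuAux.isClosed_small hfin h1ℓ)
      have hbd : Bornology.IsBounded (GSigma G ℓ) :=
        (isBounded_sphere).subset (fun z hz => hz.1)
      have hcpt : IsCompact (GSigma G ℓ) := Metric.isCompact_of_isClosed_isBounded hcl hbd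
      set U : ↥(GSigma G ℓ) → Set (Euc N) := fun z => ball (z : Euc N) (Gmu G z / 4) with hU
      obtain ⟨t, ht⟩ := hcpt.elim_finite_subcover U (fun z => isOpen_ball)
        (fun z hz => Set.mem_iUnion.2
          ⟨⟨z, hz⟩, mem_ball_self (by have := hpos z hz; linarith)⟩)
      have htne : t.Nonempty := by
        have := ht hu
        simp only [Set.mem_iUnion] at this
        obtain ⟨i, hit, -⟩ := this
        exact ⟨i, hit⟩
      set c := t.inf' htne (fun z => Gmu G (z : Euc N) / 2) with hc
      have hcpos : 0 < c := by
        rw [hc, Finset.lt_inf'_iff]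
        intro z hz
        have := hpos (z : Euc N) z.2
        linarith
      refine lt_of_lt_of_le hcpos (le_csInf himg_ne ?_)
      rintro w ⟨z', hz', rfl⟩
      have := ht hz'
      simp only [Set.mem_iUnion] at this
      obtain ⟨z, hzt, hzball⟩ := this
      calc c ≤ Gmu G (z : Euc N) / 2 := Finset.inf'_le _ hzt
        _ ≤ Gmu G z' := MuAux.key hfin z.2 hz' hl (mem_ball.1 hzball)
  · exact csInf_le_of_le hbdd ⟨u, hu, rfl⟩ (MuAux.Gmu_le_two hu.1)
end
end

section
/- Let N ≥ 1 and λ = 1 − 1/√2. For x = (r, y) ∈ ℝ × ℝ^{N−1} and ξ = (ξ_0, 0, …, 0) with 0 < r < ξ_0/2 and |y| > r, one has |x| + |ξ − x| > ξ_0 + λ|y|. -/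
theorem geometric_splitting_inequality {N : ℕ} (hN : 1 ≤ N)
    (r ξ₀ : ℝ) (y : EuclideanSpace ℝ (Fin (N - 1)))
    (hr : 0 < r) (hrξ : r < ξ₀ / 2) (hy : r < ‖y‖) :
    Real.sqrt (r ^ 2 + ‖y‖ ^ 2) + Real.sqrt ((ξ₀ - r) ^ 2 + ‖y‖ ^ 2) >
      ξ₀ + (1 - 1 / Real.sqrt 2) * ‖y‖ := by
  set s := ‖y‖ with hs
  have hs0 : 0 < s := lt_trans hr hy
  have h2 : (Real.sqrt 2) ^ 2 = 2 := Real.sq_sqrt (by norm_num)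
  have h2' : 1 < Real.sqrt 2 := by
    nlinarith [Real.sqrt_nonneg 2]
  have h1 : ξ₀ - r ≤ Real.sqrt ((ξ₀ - r) ^ 2 + s ^ 2) := by
    have := Real.sqrt_le_sqrt (show (ξ₀ - r) ^ 2 ≤ (ξ₀ - r) ^ 2 + s ^ 2 by nlinarith)
    calc ξ₀ - r ≤ |ξ₀ - r| := le_abs_self _
    _ = Real.sqrt ((ξ₀ - r) ^ 2) := by rw [Real.sqrt_sq_eq_abs]
    _ ≤ _ := this
  have hlam : 0 < 1 - 1 / Real.sqrt 2 := by
    have : 1 / Real.sqrt 2 < 1 := by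
      rw [div_lt_one (by positivity)]; exact h2'
    linarith
  have ht : (5:ℝ)/8 < 1 / Real.sqrt 2 := by
    rw [lt_div_iff₀ (by positivity)]
    nlinarith [Real.sqrt_nonneg 2]
  have h3 : r + (1 - 1 / Real.sqrt 2) * s < Real.sqrt (r ^ 2 + s ^ 2) := by
    have hL : 0 ≤ r + (1 - 1 / Real.sqrt 2) * s := by positivity
    have hinv : (1 / Real.sqrt 2) ^ 2 = 1 / 2 := by
      rw [div_pow, h2]; norm_num
    have key : (r + (1 - 1 / Real.sqrt 2) * s) ^ 2 < r ^ 2 + s ^ 2 := by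
      nlinarith [mul_pos hs0 hs0, mul_lt_mul_of_pos_right hy hs0, sq_nonneg (s - r)]
    calc r + (1 - 1 / Real.sqrt 2) * s
        = Real.sqrt ((r + (1 - 1 / Real.sqrt 2) * s) ^ 2) := (Real.sqrt_sq hL).symm
      _ < Real.sqrt (r ^ 2 + s ^ 2) := Real.sqrt_lt_sqrt (by positivity) key
  linarith
end
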